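/- Let n ≥ 2 and consider the vector field H⁺ = (ξ−ζ) Σ_j η_j ∂_{η_j} − ξ ρ ∂_ρ − 2|η|² ∂_ξ on (0,∞)_ρ × ℝ_ζ × ℝ_ξ × ℝ^{n−1}_η. Fix an initial point (ρ₊, ζ, ξ, η) with ζ > 0, 0 ≤ ξ ≤ 2ζ, and ½ξ(ξ−2ζ) + |η|² = 0. Then the curve Φ(s) = ( ρ₊ (1 + (ξ/(2ζ))(e^{−2ζs} − 1)), ζ, 2ξζ / (ξ + (2ζ−ξ)e^{2ζs}), 2ζ e^{ζs} η / (ξ + (2ζ−ξ)e^{2ζs}) ) satisfies Φ(0) = (ρ₊,ζ,ξ,η), Φ'(s) = H⁺(Φ(s)) for all s ≥ 0, and preserves the constraint. Moreover: (a) if ξ = 2ζ (hence η = 0), then Φ(s) = (ρ₊ e^{−2ζs}, ζ, 2ζ, 0), whose first component tends to 0 as s → ∞; (b) if 0 ≤ ξ < 2ζ, then Φ(s) → (ρ₊(1 − ξ/(2ζ)), ζ, 0, 0) as s → ∞. -/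

import Mathlib

open Filter Topology

/-- Explicit integration of `H⁺ = (ξ−ζ)η∂_η − ξρ∂_ρ − 2|η|²∂_ξ` through
a point with `ζ > 0`, `0 ≤ ξ ≤ 2ζ` on the characteristic set `½ξ(ξ−2ζ) + |η|² = 0`: the
curve `Φ` below solves the flow for `s ≥ 0`, preserves the constraint, and moreover:
(a) if `ξ = 2ζ` then `η = 0` and `Φ(s) = (ρ₊ e^{−2ζs}, ζ, 2ζ, 0)` with first component
tending to `0`; (b) if `ξ < 2ζ` then `Φ(s) → (ρ₊(1 − ξ/(2ζ)), ζ, 0, 0)` as `s → ∞`. -/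
theorem bicharacteristic_flow_near_Iplus
    (n : ℕ) (hn : 2 ≤ n)
    (ρp ξ ζ : ℝ) (η : EuclideanSpace ℝ (Fin (n - 1)))
    (hρ : 0 < ρp) (hζ : 0 < ζ) (hξ0 : 0 ≤ ξ) (hξ2 : ξ ≤ 2 * ζ)
    (hchar : (1 / 2) * ξ * (ξ - 2 * ζ) + ‖η‖ ^ 2 = 0) :
    let D : ℝ → ℝ := fun s => ξ + (2 * ζ - ξ) * Real.exp (2 * ζ * s)
    let Φρ : ℝ → ℝ := fun s => ρp * (1 + ξ / (2 * ζ) * (Real.exp (-2 * ζ * s) - 1))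
    let Φξ : ℝ → ℝ := fun s => 2 * ξ * ζ / D s
    let Φη : ℝ → EuclideanSpace ℝ (Fin (n - 1)) :=
      fun s => (2 * ζ * Real.exp (ζ * s) / D s) • η;
    (Φρ 0 = ρp ∧ Φξ 0 = ξ ∧ Φη 0 = η)
    ∧ (∀ s : ℝ, 0 ≤ s →
        HasDerivAt Φρ (-(Φξ s) * Φρ s) s
        ∧ HasDerivAt Φξ (-2 * ‖Φη s‖ ^ 2) s
        ∧ HasDerivAt Φη ((Φξ s - ζ) • Φη s) s
        ∧ (1 / 2) * Φξ s * (Φξ s - 2 * ζ) + ‖Φη s‖ ^ 2 = 0)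
    ∧ (ξ = 2 * ζ →
        η = 0
        ∧ (∀ s : ℝ, Φρ s = ρp * Real.exp (-2 * ζ * s) ∧ Φξ s = 2 * ζ ∧ Φη s = 0)
        ∧ Tendsto Φρ atTop (𝓝 0))
    ∧ (ξ < 2 * ζ →
        Tendsto Φρ atTop (𝓝 (ρp * (1 - ξ / (2 * ζ))))
        ∧ Tendsto Φξ atTop (𝓝 0)
        ∧ Tendsto Φη atTop (𝓝 0)) := by
  intro D Φρ Φξ Φη
  have hζ' : ζ ≠ 0 := ne_of_gt hζ
  have h2ζ : (2 : ℝ) * ζ ≠ 0 := by positivity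
  have hη2 : ‖η‖ ^ 2 = ξ * (2 * ζ - ξ) / 2 := by nlinarith [hchar]
  have hD : ∀ s : ℝ, 0 < D s := by
    intro s
    rcases lt_or_eq_of_le hξ2 with h | h
    · have h1 : 0 < (2 * ζ - ξ) * Real.exp (2 * ζ * s) :=
        mul_pos (by linarith) (Real.exp_pos _)
      simp only [D]; linarith
    · simp only [D, ← h]; simp; linarith
  have hDne : ∀ s : ℝ, D s ≠ 0 := fun s => ne_of_gt (hD s)
  have hE2 : ∀ s : ℝ, Real.exp (2 * ζ * s) = Real.exp (ζ * s) ^ 2 := by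
    intro s; rw [sq, ← Real.exp_add]; ring_nf
  have hEneg : ∀ s : ℝ, Real.exp (-2 * ζ * s) = (Real.exp (ζ * s) ^ 2)⁻¹ := by
    intro s; rw [← hE2, ← Real.exp_neg]; ring_nf
  have hΦη2 : ∀ s : ℝ, ‖Φη s‖ ^ 2 = (2 * ζ * Real.exp (ζ * s) / D s) ^ 2 * ‖η‖ ^ 2 := by
    intro s
    simp only [Φη, norm_smul, Real.norm_eq_abs, mul_pow, sq_abs]
  have hDder : ∀ s : ℝ, HasDerivAt D ((2 * ζ - ξ) * (Real.exp (2 * ζ * s) * (2 * ζ))) s := by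
    intro s
    have h1 : HasDerivAt (fun s : ℝ => 2 * ζ * s) (2 * ζ) s := by
      simpa using (hasDerivAt_id s).const_mul (2 * ζ)
    exact (((h1.exp).const_mul (2 * ζ - ξ)).const_add ξ)
  have hD0 : D 0 = 2 * ζ := by simp [D]
  constructor
  · refine ⟨by simp [Φρ], ?_, ?_⟩
    · simp only [Φξ, hD0]; field_simp
    · simp only [Φη, hD0]; rw [mul_zero, Real.exp_zero, mul_one, div_self h2ζ, one_smul]
  constructor
  · intro s _
    have hA : Real.exp (ζ * s) ≠ 0 := (Real.exp_pos _).ne'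
    have hD' : ξ + (2 * ζ - ξ) * Real.exp (ζ * s) ^ 2 ≠ 0 := by
      rw [← hE2 s]; exact hDne s
    have hρder : HasDerivAt Φρ (-(Φξ s) * Φρ s) s := by
      have h1 : HasDerivAt (fun s : ℝ => -2 * ζ * s) (-2 * ζ) s := by
        simpa using (hasDerivAt_id s).const_mul (-2 * ζ)
      have h2 := (((h1.exp.sub_const 1).const_mul (ξ / (2 * ζ))).const_add 1).const_mul ρp
      refine h2.congr_deriv (Eq.symm ?_)
      simp only [Φξ, Φρ, D, hEneg s, hE2 s]
      field_simp
      ring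
    have hξder : HasDerivAt Φξ (-2 * ‖Φη s‖ ^ 2) s := by
      have h2 := (hasDerivAt_const s (2 * ξ * ζ)).div (hDder s) (hDne s)
      refine h2.congr_deriv (Eq.symm ?_)
      rw [hΦη2 s, hη2]
      simp only [D, hE2 s]
      field_simp
      ring
    have hηder : HasDerivAt Φη ((Φξ s - ζ) • Φη s) s := by
      have h1 : HasDerivAt (fun s : ℝ => ζ * s) ζ s := by
        simpa using (hasDerivAt_id s).const_mul ζ
      have h2 := ((h1.exp.const_mul (2 * ζ)).div (hDder s) (hDne s)).smul_const η
      refine h2.congr_deriv (Eq.symm ?_)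
      simp only [Φη, Φξ, smul_smul]
      congr 1
      simp only [D, hE2 s]
      field_simp
      ring
    refine ⟨hρder, hξder, hηder, ?_⟩
    rw [hΦη2 s, hη2]
    simp only [Φξ, D, hE2 s]
    field_simp
    ring
  constructor
  · intro h
    have hη0 : η = 0 := by
      have : ‖η‖ ^ 2 = 0 := by rw [hη2, h]; ring
      simpa using this
    have hDs : ∀ s : ℝ, D s = 2 * ζ := by intro s; simp [D, h]
    have hΦρ : ∀ s : ℝ, Φρ s = ρp * Real.exp (-2 * ζ * s) := by
      intro s
      simp only [Φρ, h]
      field_simp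
      ring
    have hΦξ : ∀ s : ℝ, Φξ s = 2 * ζ := by
      intro s
      simp only [Φξ, hDs s, h]
      field_simp
    refine ⟨hη0, fun s => ⟨hΦρ s, hΦξ s, by simp [Φη, hη0]⟩, ?_⟩
    have h1 : Tendsto (fun s : ℝ => Real.exp (-2 * ζ * s)) atTop (𝓝 0) := by
      have h2 : Tendsto (fun s : ℝ => 2 * ζ * s) atTop atTop :=
        Tendsto.const_mul_atTop (by linarith) tendsto_id
      refine (Real.tendsto_exp_neg_atTop_nhds_zero.comp h2).congr fun s => ?_
      simp only [Function.comp]; ring_nf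
    have h3 := h1.const_mul ρp
    rw [mul_zero] at h3
    exact h3.congr fun s => (hΦρ s).symm
  · intro h
    have hpos : 0 < 2 * ζ - ξ := by linarith
    have hEtop : Tendsto (fun s : ℝ => Real.exp (ζ * s)) atTop atTop :=
      Real.tendsto_exp_atTop.comp (Tendsto.const_mul_atTop hζ tendsto_id)
    have hEneg0 : Tendsto (fun s : ℝ => Real.exp (-2 * ζ * s)) atTop (𝓝 0) := by
      have h2 : Tendsto (fun s : ℝ => 2 * ζ * s) atTop atTop :=
        Tendsto.const_mul_atTop (by linarith) tendsto_id
      refine (Real.tendsto_exp_neg_atTop_nhds_zero.comp h2).congr fun s => ?_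
      simp only [Function.comp]; ring_nf
    have hDtop : Tendsto D atTop atTop := by
      have h1 : Tendsto (fun s : ℝ => Real.exp (2 * ζ * s)) atTop atTop :=
        Real.tendsto_exp_atTop.comp (Tendsto.const_mul_atTop (by linarith) tendsto_id)
      refine tendsto_atTop_mono (fun s => ?_) (Tendsto.const_mul_atTop hpos h1)
      simp only [D]; linarith
    refine ⟨?_, ?_, ?_⟩
    · have h1 := (((hEneg0.sub_const 1).const_mul (ξ / (2 * ζ))).const_add 1).const_mul ρp
      convert h1 using 2
      ring
    · exact (tendsto_const_nhds (x := 2 * ξ * ζ) (f := atTop (α := ℝ))).div_atTop hDtop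
    · have hc : Tendsto (fun s : ℝ => 2 * ζ * Real.exp (ζ * s) / D s) atTop (𝓝 0) := by
        have hb : Tendsto (fun s : ℝ => 2 * ζ / ((2 * ζ - ξ) * Real.exp (ζ * s)))
            atTop (𝓝 0) :=
          tendsto_const_nhds.div_atTop (Tendsto.const_mul_atTop hpos hEtop)
        refine tendsto_of_tendsto_of_tendsto_of_le_of_le tendsto_const_nhds hb
          (fun s => ?_) (fun s => ?_)
        · exact div_nonneg (by positivity) (hD s).le
        · rw [div_le_div_iff₀ (hD s) (mul_pos hpos (Real.exp_pos _))]
          simp only [D, hE2 s]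
          nlinarith [Real.exp_pos (ζ * s), mul_nonneg hξ0 hζ.le]
      have h4 := hc.smul_const η
      rw [zero_smul] at h4
      exact h4
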